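/- Fix a permutation π of V, J ∈ V, and an integer m ≥ 1. Suppose a^J_I = 0 for every I ∈ V with Hamming weight |I| > m. Then the number of nodes used is bounded by m·2^{2m−2}: the cardinality of {i ∈ Fin n : ∃ g ∈ V, a^J_g ≠ 0 ∧ g i = 1} is at most m·2^{2m−2}. -/

import Mathlib

open Finset

/-- Hamming weight of an n-bit vector. -/
def wt {n : ℕ} (v : Fin n → ZMod 2) : ℕ :=
  (Finset.univ.filter (fun i => v i = 1)).card

/-- The sign (-1)^{u·v} ∈ ℝ. -/
noncomputable def sgn {n : ℕ} (u v : Fin n → ZMod 2) : ℝ :=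
  if (∑ i, u i * v i) = (1 : ZMod 2) then -1 else 1

/-- Fourier coefficient a^J_I, for a permutation π of V = Fin n → ZMod 2. -/
noncomputable def fc {n : ℕ} (π : Equiv.Perm (Fin n → ZMod 2))
    (J I : Fin n → ZMod 2) : ℝ :=
  (1 / 2 ^ n) * ∑ x : Fin n → ZMod 2, sgn I x * sgn (π x) J

section Aux
open Classical

variable {n : ℕ}

lemma zmod2_cases (a : ZMod 2) : a = 0 ∨ a = 1 := by revert a; decide

lemma dot_add_left (I I' x : Fin n → ZMod 2) :
    (∑ i, (I + I') i * x i) = (∑ i, I i * x i) + (∑ i, I' i * x i) := by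
  rw [← Finset.sum_add_distrib]
  refine Finset.sum_congr rfl fun i _ => ?_
  simp [add_mul]

lemma sgn_add_left (I I' x : Fin n → ZMod 2) :
    sgn (I + I') x = sgn I x * sgn I' x := by
  unfold sgn
  rw [dot_add_left]
  rcases zmod2_cases (∑ i, I i * x i) with h1 | h1 <;>
    rcases zmod2_cases (∑ i, I' i * x i) with h2 | h2 <;>
    simp [h1, h2]

lemma sgn_comm (I x : Fin n → ZMod 2) : sgn I x = sgn x I := by
  unfold sgn
  congr 1
  simp [mul_comm]

lemma sgn_add_right (I x y : Fin n → ZMod 2) :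
    sgn I (x + y) = sgn I x * sgn I y := by
  rw [sgn_comm, sgn_add_left, sgn_comm x, sgn_comm y]

lemma sgn_vals (I x : Fin n → ZMod 2) : sgn I x = 1 ∨ sgn I x = -1 := by
  unfold sgn; split <;> simp

lemma sgn_mul_self (I x : Fin n → ZMod 2) : sgn I x * sgn I x = 1 := by
  rcases sgn_vals I x with h | h <;> rw [h] <;> norm_num

/-- indicator vector of a single coordinate -/
def ej (j : Fin n) : Fin n → ZMod 2 := fun i => if i = j then 1 else 0

lemma sgn_ej (K : Fin n → ZMod 2) (j : Fin n) :
    sgn K (ej j) = if K j = 1 then -1 else 1 := by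
  unfold sgn ej
  congr 1
  rw [Finset.sum_eq_single j]
  · simp
  · intro i _ hij; simp [hij]
  · simp

lemma sum_sgn_zero : (∑ x : Fin n → ZMod 2, sgn (0 : Fin n → ZMod 2) x) = 2 ^ n := by
  have h : ∀ x : Fin n → ZMod 2, sgn (0 : Fin n → ZMod 2) x = 1 := by
    intro x; unfold sgn
    rw [if_neg]
    simp
  rw [Finset.sum_congr rfl (fun x _ => h x), Finset.sum_const]
  simp [Fintype.card_fun]

lemma add_self_eq_zero' (I : Fin n → ZMod 2) : I + I = 0 := by
  funext i
  rcases zmod2_cases (I i) with h | h <;> simp [h] <;> decide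

lemma sum_sgn_ne (K : Fin n → ZMod 2) (hK : K ≠ 0) :
    (∑ x : Fin n → ZMod 2, sgn K x) = 0 := by
  obtain ⟨j, hj⟩ : ∃ j, K j ≠ 0 := by
    by_contra h
    push_neg at h
    exact hK (funext h)
  have hj1 : K j = 1 := by rcases zmod2_cases (K j) with h | h; exact absurd h hj; exact h
  have key : (∑ x : Fin n → ZMod 2, sgn K x)
      = ∑ x : Fin n → ZMod 2, sgn K (x + ej j) :=
    Fintype.sum_equiv (Equiv.addRight (ej j)) _ _
      (fun x => by simp [Equiv.addRight, add_assoc, add_self_eq_zero'])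
  have h2 : ∀ x : Fin n → ZMod 2, sgn K (x + ej j) = - sgn K x := by
    intro x
    rw [sgn_add_right, sgn_ej, if_pos hj1]
    ring
  rw [Finset.sum_congr rfl (fun x _ => h2 x), Finset.sum_neg_distrib] at key
  linarith

lemma sum_sgn (K : Fin n → ZMod 2) :
    (∑ x : Fin n → ZMod 2, sgn K x) = if K = 0 then (2:ℝ) ^ n else 0 := by
  split
  · subst ‹K = 0›; exact sum_sgn_zero
  · exact sum_sgn_ne K ‹K ≠ 0›

lemma orthogonality (I I' : Fin n → ZMod 2) :
    (∑ x : Fin n → ZMod 2, sgn I x * sgn I' x) = if I = I' then (2:ℝ) ^ n else 0 := by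
  have : ∀ x, sgn I x * sgn I' x = sgn (I + I') x := fun x => (sgn_add_left I I' x).symm
  rw [Finset.sum_congr rfl (fun x _ => this x), sum_sgn]
  congr 1
  simp only [eq_iff_iff]
  constructor
  · intro h
    have := congrArg (· + I') h
    simpa [add_assoc, add_self_eq_zero'] using this
  · intro h; subst h; exact add_self_eq_zero' I

lemma fourier_inversion (π : Equiv.Perm (Fin n → ZMod 2)) (J x : Fin n → ZMod 2) :
    (∑ I : Fin n → ZMod 2, fc π J I * sgn I x) = sgn (π x) J := by
  unfold fc
  have e1 : ∀ I : Fin n → ZMod 2, (1 / 2 ^ n *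
        ∑ y : Fin n → ZMod 2, sgn I y * sgn (π y) J) * sgn I x
      = ∑ y : Fin n → ZMod 2, (1 / 2 ^ n : ℝ) * (sgn (π y) J * (sgn y I * sgn x I)) := by
    intro I
    rw [Finset.mul_sum, Finset.sum_mul]
    refine Finset.sum_congr rfl fun y _ => ?_
    rw [sgn_comm y I, sgn_comm x I]
    ring
  rw [Finset.sum_congr rfl fun I _ => e1 I, Finset.sum_comm]
  have e2 : ∀ y : Fin n → ZMod 2,
      (∑ I : Fin n → ZMod 2, (1 / 2 ^ n : ℝ) * (sgn (π y) J * (sgn y I * sgn x I)))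
      = if y = x then sgn (π y) J else 0 := by
    intro y
    rw [← Finset.mul_sum, ← Finset.mul_sum, orthogonality y x]
    split
    · field_simp
    · simp
  rw [Finset.sum_congr rfl fun y _ => e2 y]
  simp

lemma parseval (π : Equiv.Perm (Fin n → ZMod 2)) (J : Fin n → ZMod 2) :
    (∑ I : Fin n → ZMod 2, fc π J I ^ 2) = 1 := by
  have e1 : ∀ I : Fin n → ZMod 2, fc π J I ^ 2
      = ∑ x : Fin n → ZMod 2, (1 / 2 ^ n : ℝ) * (sgn (π x) J * (fc π J I * sgn I x)) := by
    intro I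
    rw [sq]
    nth_rewrite 1 [fc]
    rw [mul_assoc, Finset.sum_mul, Finset.mul_sum]
    refine Finset.sum_congr rfl fun x _ => ?_
    ring
  rw [Finset.sum_congr rfl fun I _ => e1 I, Finset.sum_comm]
  have e2 : ∀ x : Fin n → ZMod 2,
      (∑ I : Fin n → ZMod 2, (1 / 2 ^ n : ℝ) * (sgn (π x) J * (fc π J I * sgn I x)))
      = (1 / 2 ^ n : ℝ) := by
    intro x
    rw [← Finset.mul_sum, ← Finset.mul_sum, fourier_inversion π J x, sgn_mul_self]
    ring
  rw [Finset.sum_congr rfl fun x _ => e2 x, Finset.sum_const]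
  simp [Fintype.card_fun]

/-! ### Integer-side machinery for granularity -/

/-- ±1 integer sgnz of a `ZMod 2` element. -/
def eps (a : ZMod 2) : ℤ := if a = 1 then -1 else 1

lemma eps_add (a b : ZMod 2) : eps (a + b) = eps a * eps b := by revert a b; decide

lemma eps_sum {α : Type*} (s : Finset α) (v : α → ZMod 2) :
    eps (∑ i ∈ s, v i) = ∏ i ∈ s, eps (v i) := by
  induction s using Finset.cons_induction with
  | empty => simp [eps]
  | cons a s ha ih => rw [Finset.sum_cons, Finset.prod_cons, eps_add, ih]

/-- integer version of `sgn` -/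
def eI (I x : Fin n → ZMod 2) : ℤ := eps (∑ i, I i * x i)

lemma eI_prod (I x : Fin n → ZMod 2) : eI I x = ∏ i, eps (I i * x i) := eps_sum _ _

/-- per-coordinate monomial factor -/
def monF (s a : ZMod 2) : ℤ := if s = 1 then (if a = 1 then 1 else 0) else 1

/-- monomial: 1 if `supp S ⊆ supp x`, else 0 -/
def mon (S x : Fin n → ZMod 2) : ℤ := ∏ i, monF (S i) (x i)

/-- (-1)^{wt S} as a product -/
def sgnz (S : Fin n → ZMod 2) : ℤ := ∏ i, (if S i = 1 then -1 else 1)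

/-- 2^{n - wt S} as a product -/
def pw (S : Fin n → ZMod 2) : ℤ := ∏ i, (if S i = 1 then 1 else 2)

lemma sum_pi_prod (F : Fin n → ZMod 2 → ℤ) :
    (∑ x : Fin n → ZMod 2, ∏ i, F i (x i)) = ∏ i, (∑ a : ZMod 2, F i a) :=
  (Fintype.prod_sum _).symm

lemma sgnz_mul_self (S : Fin n → ZMod 2) : sgnz S * sgnz S = 1 := by
  rw [sgnz, ← Finset.prod_mul_distrib]
  rw [Finset.prod_congr rfl (fun i _ => show _ = (1:ℤ) by split <;> norm_num)]
  exact Finset.prod_const_one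

lemma sgnz_ne_zero (S : Fin n → ZMod 2) : sgnz S ≠ 0 := by
  intro h
  have := sgnz_mul_self S
  rw [h] at this
  norm_num at this

lemma prod_delta (T x : Fin n → ZMod 2) :
    (∏ i, (if T i = x i then (1:ℤ) else 0)) = if T = x then 1 else 0 := by
  split
  · subst ‹T = x›; simp
  · obtain ⟨i, hi⟩ := Function.ne_iff.mp ‹T ≠ x›
    exact Finset.prod_eq_zero (Finset.mem_univ i) (if_neg hi)

lemma sum_eI_mon (I S : Fin n → ZMod 2) :
    (∑ x : Fin n → ZMod 2, eI I x * mon S x) = mon I S * sgnz I * pw S := by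
  have e1 : ∀ x : Fin n → ZMod 2, eI I x * mon S x
      = ∏ i, (eps (I i * x i) * monF (S i) (x i)) := by
    intro x
    rw [eI_prod, mon, ← Finset.prod_mul_distrib]
  rw [Finset.sum_congr rfl fun x _ => e1 x,
    sum_pi_prod (fun i a => eps (I i * a) * monF (S i) a)]
  rw [mon, sgnz, pw, ← Finset.prod_mul_distrib, ← Finset.prod_mul_distrib]
  refine Finset.prod_congr rfl fun i _ => ?_
  have key : ∀ a b : ZMod 2, (∑ c : ZMod 2, eps (a * c) * monF b c)
      = monF a b * (if a = 1 then -1 else 1) * (if b = 1 then 1 else 2) := by decide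
  exact key (I i) (S i)

lemma sum_sign_mon (T x : Fin n → ZMod 2) :
    (∑ S : Fin n → ZMod 2, sgnz S * mon T S * mon S x)
      = (if T = x then 1 else 0) * sgnz x := by
  have e1 : ∀ S : Fin n → ZMod 2, sgnz S * mon T S * mon S x
      = ∏ i, ((if S i = 1 then -1 else 1) * monF (T i) (S i) * monF (S i) (x i)) := by
    intro S
    rw [sgnz, mon, mon, ← Finset.prod_mul_distrib, ← Finset.prod_mul_distrib]
  rw [Finset.sum_congr rfl fun S _ => e1 S,
    sum_pi_prod (fun i a => (if a = 1 then (-1:ℤ) else 1) * monF (T i) a * monF a (x i))]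
  have key : ∀ t xi : ZMod 2,
      (∑ s : ZMod 2, (if s = 1 then (-1:ℤ) else 1) * monF t s * monF s xi)
      = (if t = xi then 1 else 0) * (if xi = 1 then -1 else 1) := by decide
  rw [Finset.prod_congr rfl fun i _ => key (T i) (x i), Finset.prod_mul_distrib,
    prod_delta]
  rfl

lemma mon_self (S : Fin n → ZMod 2) : mon S S = 1 := by
  rw [mon, Finset.prod_congr rfl (fun i _ => show monF (S i) (S i) = 1 by
    revert S; intro S; rcases zmod2_cases (S i) with h | h <;> simp [monF, h])]
  exact Finset.prod_const_one

lemma mon_cases (S x : Fin n → ZMod 2) : mon S x = 0 ∨ mon S x = 1 := by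
  rw [mon]
  by_cases h : ∀ i, monF (S i) (x i) = 1
  · right; rw [Finset.prod_congr rfl (fun i _ => h i)]; exact Finset.prod_const_one
  · left
    push_neg at h
    obtain ⟨i, hi⟩ := h
    refine Finset.prod_eq_zero (Finset.mem_univ i) ?_
    rcases zmod2_cases (S i) with h1 | h1 <;> rcases zmod2_cases (x i) with h2 | h2 <;>
      simp [monF, h1, h2] at hi ⊢

lemma le_of_mon_ne_zero {S x : Fin n → ZMod 2} (h : mon S x ≠ 0) :
    ∀ i, S i = 1 → x i = 1 := by
  intro i hi
  by_contra hx
  have hx0 : x i = 0 := by rcases zmod2_cases (x i) with h2 | h2; exact h2; exact absurd h2 hx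
  exact h (Finset.prod_eq_zero (Finset.mem_univ i) (by simp [monF, hi, hx0]))

lemma wt_le (v : Fin n → ZMod 2) : wt v ≤ n := by
  have := Finset.card_filter_le Finset.univ (fun i => v i = 1)
  simpa [wt] using this

lemma wt_lt_of_le_ne {S S' : Fin n → ZMod 2} (h : ∀ i, S i = 1 → S' i = 1)
    (hne : S ≠ S') : wt S < wt S' := by
  apply Finset.card_lt_card
  constructor
  · intro i hi
    simp only [Finset.mem_filter, Finset.mem_univ, true_and] at hi ⊢
    exact h i hi
  · intro hsub
    obtain ⟨i, hi⟩ := Function.ne_iff.mp hne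
    have h1 : S i = 0 := by
      rcases zmod2_cases (S i) with h1 | h1
      · exact h1
      · exact absurd (h i h1 ▸ h1 ▸ rfl : S i = S' i) hi
    have h2 : S' i = 1 := by
      rcases zmod2_cases (S' i) with h2 | h2
      · exact absurd (h1.trans h2.symm) hi
      · exact h2
    have : i ∈ Finset.univ.filter (fun j => S j = 1) :=
      hsub (by simp [h2])
    simp [h1] at this

lemma pw_eq (S : Fin n → ZMod 2) : pw S = 2 ^ (n - wt S) := by
  rw [pw, Finset.prod_ite]
  have hcard : (Finset.univ.filter (fun i => ¬ S i = 1)).card = n - wt S := by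
    have := Finset.card_filter_add_card_filter_not
      (s := (Finset.univ : Finset (Fin n))) (p := fun i => S i = 1)
    simp only [Finset.card_univ, Fintype.card_fin] at this
    unfold wt
    omega
  rw [Finset.prod_const, Finset.prod_const, hcard]
  simp

lemma pw_ne_zero (S : Fin n → ZMod 2) : pw S ≠ 0 := by
  rw [pw_eq]
  positivity

section Perm

variable (π : Equiv.Perm (Fin n → ZMod 2)) (J : Fin n → ZMod 2)

/-- 0/1-valued integer version of the Boolean function `x ↦ sgn (π x) J`. -/
def gb (x : Fin n → ZMod 2) : ℤ := if (∑ i, (π x) i * J i) = 1 then 1 else 0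

/-- Integer (unnormalized, 0/1-convention) Fourier coefficient. -/
def MM (I : Fin n → ZMod 2) : ℤ := ∑ x : Fin n → ZMod 2, eI I x * gb π J x

/-- Möbius coefficients of `gb` in the monomial basis. -/
def cc (S : Fin n → ZMod 2) : ℤ :=
  sgnz S * ∑ T : Fin n → ZMod 2, mon T S * (sgnz T * gb π J T)

lemma mobius_inv (x : Fin n → ZMod 2) :
    (∑ S : Fin n → ZMod 2, cc π J S * mon S x) = gb π J x := by
  unfold cc
  have e1 : ∀ S : Fin n → ZMod 2,
      (sgnz S * ∑ T : Fin n → ZMod 2, mon T S * (sgnz T * gb π J T)) * mon S x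
      = ∑ T : Fin n → ZMod 2, (sgnz T * gb π J T) * (sgnz S * mon T S * mon S x) := by
    intro S
    rw [Finset.mul_sum, Finset.sum_mul]
    exact Finset.sum_congr rfl fun T _ => by ring
  rw [Finset.sum_congr rfl fun S _ => e1 S, Finset.sum_comm]
  have e2 : ∀ T : Fin n → ZMod 2,
      (∑ S : Fin n → ZMod 2, (sgnz T * gb π J T) * (sgnz S * mon T S * mon S x))
      = if T = x then (sgnz T * gb π J T) * sgnz x else 0 := by
    intro T
    rw [← Finset.mul_sum, sum_sign_mon]
    split <;> simp_all <;> ring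
  rw [Finset.sum_congr rfl fun T _ => e2 T, Finset.sum_ite_eq' Finset.univ x
    (fun T => (sgnz T * gb π J T) * sgnz x)]
  simp only [Finset.mem_univ, if_true]
  calc sgnz x * gb π J x * sgnz x = (sgnz x * sgnz x) * gb π J x := by ring
  _ = gb π J x := by rw [sgnz_mul_self, one_mul]

lemma MM_eq : ∀ I : Fin n → ZMod 2,
    MM π J I = sgnz I * ∑ S : Fin n → ZMod 2, mon I S * pw S * cc π J S := by
  intro I
  unfold MM
  rw [Finset.sum_congr rfl fun x _ => by rw [← mobius_inv π J x]]
  have e1 : ∀ x : Fin n → ZMod 2,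
      eI I x * (∑ S : Fin n → ZMod 2, cc π J S * mon S x)
      = ∑ S : Fin n → ZMod 2, cc π J S * (eI I x * mon S x) := by
    intro x
    rw [Finset.mul_sum]
    exact Finset.sum_congr rfl fun S _ => by ring
  rw [Finset.sum_congr rfl fun x _ => e1 x, Finset.sum_comm, Finset.mul_sum]
  refine Finset.sum_congr rfl fun S _ => ?_
  rw [← Finset.mul_sum, sum_eI_mon]
  ring

end Perm

section Perm2

variable (π : Equiv.Perm (Fin n → ZMod 2)) (J : Fin n → ZMod 2) (m : ℕ)

lemma cc_vanish (hM : ∀ S : Fin n → ZMod 2, m < wt S → MM π J S = 0) :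
    ∀ k, ∀ S : Fin n → ZMod 2, n - wt S < k → m < wt S → cc π J S = 0 := by
  intro k
  induction k with
  | zero => intro S h; omega
  | succ k ih =>
    intro S hk hS
    have hMS := hM S hS
    rw [MM_eq] at hMS
    have hsplit : (∑ S' : Fin n → ZMod 2, mon S S' * pw S' * cc π J S')
        = pw S * cc π J S := by
      rw [Finset.sum_eq_single S]
      · rw [mon_self, one_mul]
      · intro S' _ hne
        rcases mon_cases S S' with h0 | h1
        · rw [h0]; ring
        · have hle := le_of_mon_ne_zero (S := S) (x := S') (by rw [h1]; norm_num)
          have hlt : wt S < wt S' := wt_lt_of_le_ne hle (Ne.symm hne)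
          have hS'n := wt_le S'
          have : cc π J S' = 0 := ih S' (by omega) (by omega)
          rw [this]; ring
      · intro h; exact absurd (Finset.mem_univ S) h
    rw [hsplit] at hMS
    rcases mul_eq_zero.mp hMS with h | h
    · exact absurd h (sgnz_ne_zero S)
    · rcases mul_eq_zero.mp h with h' | h'
      · exact absurd h' (pw_ne_zero S)
      · exact h'

lemma dvd_MM (hM : ∀ S : Fin n → ZMod 2, m < wt S → MM π J S = 0)
    (I : Fin n → ZMod 2) : (2:ℤ) ^ (n - m) ∣ MM π J I := by
  rw [MM_eq]
  apply Dvd.dvd.mul_left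
  apply Finset.dvd_sum
  intro S _
  by_cases h : m < wt S
  · rw [cc_vanish π J m hM (n - wt S + 1) S (by omega) h]
    simp
  · push_neg at h
    have hdvd : (2:ℤ) ^ (n - m) ∣ pw S := by
      rw [pw_eq]
      exact pow_dvd_pow 2 (Nat.sub_le_sub_left h n)
    exact (hdvd.mul_left (mon I S)).mul_right (cc π J S)

end Perm2

section Bridge

variable (π : Equiv.Perm (Fin n → ZMod 2)) (J : Fin n → ZMod 2)

lemma eI_cast (I x : Fin n → ZMod 2) : ((eI I x : ℤ) : ℝ) = sgn I x := by
  unfold eI eps sgn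
  split <;> norm_num

lemma sgn_eq_gb (x : Fin n → ZMod 2) :
    sgn (π x) J = 1 - 2 * ((gb π J x : ℤ) : ℝ) := by
  unfold sgn gb
  split <;> norm_num

lemma wt_zero : wt (0 : Fin n → ZMod 2) = 0 := by
  unfold wt
  rw [Finset.card_eq_zero, Finset.filter_eq_empty_iff]
  intro i _
  show ¬ (0:ZMod 2) = 1
  decide

lemma fc_eq_MM (I : Fin n → ZMod 2) :
    (2:ℝ) ^ n * fc π J I
      = (if I = 0 then (2:ℝ) ^ n else 0) - 2 * ((MM π J I : ℤ) : ℝ) := by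
  unfold fc
  have h1 : ∀ x : Fin n → ZMod 2, sgn I x * sgn (π x) J
      = sgn I x - 2 * (sgn I x * ((gb π J x : ℤ) : ℝ)) := by
    intro x
    rw [sgn_eq_gb]
    ring
  have h2 : (∑ x : Fin n → ZMod 2, sgn I x * sgn (π x) J)
      = (∑ x : Fin n → ZMod 2, sgn I x)
        - 2 * ∑ x : Fin n → ZMod 2, sgn I x * ((gb π J x : ℤ) : ℝ) := by
    rw [Finset.sum_congr rfl fun x _ => h1 x, Finset.sum_sub_distrib, ← Finset.mul_sum]
  have h3 : (∑ x : Fin n → ZMod 2, sgn I x * ((gb π J x : ℤ) : ℝ))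
      = ((MM π J I : ℤ) : ℝ) := by
    unfold MM
    push_cast
    exact Finset.sum_congr rfl fun x _ => by rw [eI_cast]
  rw [h2, h3, sum_sgn]
  have h2n : (2:ℝ) ^ n ≠ 0 := by positivity
  field_simp

lemma MM_vanish (m : ℕ) (hm : 1 ≤ m)
    (hloc : ∀ I : Fin n → ZMod 2, m < wt I → fc π J I = 0) :
    ∀ S : Fin n → ZMod 2, m < wt S → MM π J S = 0 := by
  intro S hS
  have hS0 : S ≠ 0 := by
    intro h
    rw [h, wt_zero] at hS
    omega
  have := fc_eq_MM π J S
  rw [hloc S hS, if_neg hS0, mul_zero] at this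
  have : ((MM π J S : ℤ) : ℝ) = 0 := by linarith
  exact_mod_cast this

lemma fc_sq_ge (m : ℕ) (hn : 1 ≤ n) (hm : 1 ≤ m) (hmn : m ≤ n)
    (hloc : ∀ I : Fin n → ZMod 2, m < wt I → fc π J I = 0) :
    ∀ I : Fin n → ZMod 2, fc π J I ≠ 0 → (1:ℝ) / 2 ^ (2 * m - 2) ≤ fc π J I ^ 2 := by
  intro I hI
  set N : ℤ := (if I = 0 then 2 ^ n else 0) - 2 * MM π J I with hN
  have hcast : (2:ℝ) ^ n * fc π J I = (N : ℝ) := by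
    rw [fc_eq_MM, hN]
    by_cases h : I = 0 <;> simp only [h, if_true, if_false] <;> push_cast <;> ring
  have hdvd : (2:ℤ) ^ (n - m + 1) ∣ N := by
    apply dvd_sub
    · split
      · exact pow_dvd_pow 2 (by omega)
      · exact dvd_zero _
    · have h1 : (2:ℤ) ^ (n - m + 1) = 2 ^ (n - m) * 2 := by rw [pow_succ]
      rw [h1, mul_comm (2 ^ (n-m)) 2]
      exact mul_dvd_mul_left 2 (dvd_MM π J m (MM_vanish π J m hm hloc) I)
  have hN0 : N ≠ 0 := by
    intro h
    apply hI
    have h2n : (2:ℝ) ^ n ≠ 0 := by positivity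
    have := hcast
    rw [h] at this
    push_cast at this
    exact (mul_eq_zero.mp this).resolve_left h2n
  have habs : (2:ℤ) ^ (n - m + 1) ≤ |N| :=
    Int.le_of_dvd (abs_pos.mpr hN0) ((dvd_abs _ _).mpr hdvd)
  have hsq : ((2:ℝ) ^ (n - m + 1)) ^ 2 ≤ (N : ℝ) ^ 2 := by
    have h1 : ((2:ℝ) ^ (n - m + 1)) ≤ |(N : ℝ)| := by
      rw [← Int.cast_abs]
      exact_mod_cast habs
    have h2 : (0:ℝ) ≤ 2 ^ (n - m + 1) := by positivity
    calc ((2:ℝ) ^ (n - m + 1)) ^ 2 ≤ |(N : ℝ)| ^ 2 := by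
          exact pow_le_pow_left₀ h2 h1 2
      _ = (N : ℝ) ^ 2 := sq_abs _
  have hfc2 : fc π J I ^ 2 = (N : ℝ) ^ 2 / ((2:ℝ) ^ n) ^ 2 := by
    have h2n : ((2:ℝ) ^ n) ≠ 0 := by positivity
    field_simp
    rw [← hcast]
    ring
  rw [hfc2]
  rw [div_le_div_iff₀ (by positivity) (by positivity)]
  calc 1 * ((2:ℝ) ^ n) ^ 2 = ((2:ℝ) ^ (n - m + 1)) ^ 2 * 2 ^ (2 * m - 2) := by
        rw [one_mul, ← pow_mul, ← pow_mul, ← pow_add]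
        congr 1
        omega
    _ ≤ (N : ℝ) ^ 2 * 2 ^ (2 * m - 2) := by
        have : (0:ℝ) ≤ 2 ^ (2 * m - 2) := by positivity
        nlinarith [hsq]

end Bridge

section Assembly

variable (π : Equiv.Perm (Fin n → ZMod 2)) (J : Fin n → ZMod 2)

/-- Influence of coordinate `i`. -/
noncomputable def Infl (i : Fin n) : ℝ :=
  ∑ I : Fin n → ZMod 2, (if I i = 1 then fc π J I ^ 2 else 0)

lemma Infl_nonneg (i : Fin n) : 0 ≤ Infl π J i :=
  Finset.sum_nonneg fun I _ => by split
                                  · positivity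
                                  · exact le_refl _

lemma sum_Infl : (∑ i, Infl π J i)
    = ∑ I : Fin n → ZMod 2, (wt I : ℝ) * fc π J I ^ 2 := by
  unfold Infl
  rw [Finset.sum_comm]
  refine Finset.sum_congr rfl fun I _ => ?_
  rw [Finset.sum_ite, Finset.sum_const, Finset.sum_const_zero, add_zero, nsmul_eq_mul, wt]

lemma sum_Infl_le (m : ℕ) (hloc : ∀ I : Fin n → ZMod 2, m < wt I → fc π J I = 0) :
    (∑ i, Infl π J i) ≤ m := by
  rw [sum_Infl]
  have step : ∀ I : Fin n → ZMod 2, (wt I : ℝ) * fc π J I ^ 2 ≤ m * fc π J I ^ 2 := by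
    intro I
    by_cases h : m < wt I
    · rw [hloc I h]
      simp
    · push_neg at h
      exact mul_le_mul_of_nonneg_right (by exact_mod_cast h) (sq_nonneg _)
  calc (∑ I : Fin n → ZMod 2, (wt I : ℝ) * fc π J I ^ 2)
      ≤ ∑ I : Fin n → ZMod 2, (m : ℝ) * fc π J I ^ 2 := Finset.sum_le_sum fun I _ => step I
    _ = m := by rw [← Finset.mul_sum, parseval, mul_one]

lemma Infl_ge (m : ℕ) (hn : 1 ≤ n) (hm : 1 ≤ m) (hmn : m ≤ n)
    (hloc : ∀ I : Fin n → ZMod 2, m < wt I → fc π J I = 0)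
    (i : Fin n) (hi : ∃ g : Fin n → ZMod 2, fc π J g ≠ 0 ∧ g i = 1) :
    (1:ℝ) / 2 ^ (2 * m - 2) ≤ Infl π J i := by
  obtain ⟨g, hg, hgi⟩ := hi
  have h1 : fc π J g ^ 2 ≤ Infl π J i := by
    have := Finset.single_le_sum (s := Finset.univ)
      (f := fun I : Fin n → ZMod 2 => (if I i = 1 then fc π J I ^ 2 else 0))
      (fun I _ => by show 0 ≤ (if I i = 1 then fc π J I ^ 2 else 0)
                     split
                     · positivity
                     · exact le_refl _)
      (Finset.mem_univ g)
    simpa [Infl, hgi] using this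
  exact le_trans (fc_sq_ge π J m hn hm hmn hloc g hg) h1

lemma main_aux (hn : 1 ≤ n) (m : ℕ) (hm : 1 ≤ m)
    (hloc : ∀ I : Fin n → ZMod 2, m < wt I → fc π J I = 0)
    (P : Finset (Fin n))
    (hP : ∀ i ∈ P, ∃ g : Fin n → ZMod 2, fc π J g ≠ 0 ∧ g i = 1) :
    P.card ≤ m * 2 ^ (2 * m - 2) := by
  by_cases hmn : n ≤ m
  · calc P.card ≤ (Finset.univ : Finset (Fin n)).card :=
          Finset.card_le_card (Finset.subset_univ P)
      _ = n := by simp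
      _ ≤ m := hmn
      _ ≤ m * 2 ^ (2 * m - 2) := Nat.le_mul_of_pos_right m (Nat.pow_pos (by norm_num))
  · push_neg at hmn
    have hmn' : m ≤ n := le_of_lt hmn
    have h2 : (P.card : ℝ) * ((1:ℝ) / 2 ^ (2 * m - 2)) ≤ ∑ i ∈ P, Infl π J i := by
      have := Finset.card_nsmul_le_sum P (Infl π J) ((1:ℝ) / 2 ^ (2 * m - 2))
        (fun i hi => Infl_ge π J m hn hm hmn' hloc i (hP i hi))
      rwa [nsmul_eq_mul] at this
    have h3 : (∑ i ∈ P, Infl π J i) ≤ ∑ i, Infl π J i :=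
      Finset.sum_le_sum_of_subset_of_nonneg (Finset.subset_univ P)
        (fun i _ _ => Infl_nonneg π J i)
    have h4 := sum_Infl_le π J m hloc
    have hfin : (P.card : ℝ) ≤ m * 2 ^ (2 * m - 2) := by
      have hc : (0:ℝ) < 2 ^ (2 * m - 2) := by positivity
      rw [mul_one_div, div_le_iff₀ hc] at h2
      have h5 : (∑ i ∈ P, Infl π J i) ≤ m := le_trans h3 h4
      calc (P.card : ℝ) ≤ (∑ i ∈ P, Infl π J i) * 2 ^ (2 * m - 2) := h2
        _ ≤ m * 2 ^ (2 * m - 2) := mul_le_mul_of_nonneg_right h5 hc.le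
    exact_mod_cast hfin

end Assembly

end Aux

open Classical in
/-- If all Fourier coefficients of J vanish above locality m, then the number of
nodes (bits used by some nonzero coefficient) is at most m·2^(2m-2) (bound B_m). -/
theorem fc_nodes_bound {n : ℕ} (hn : 1 ≤ n) (π : Equiv.Perm (Fin n → ZMod 2))
    (J : Fin n → ZMod 2) (m : ℕ) (hm : 1 ≤ m)
    (hloc : ∀ I : Fin n → ZMod 2, m < wt I → fc π J I = 0) :
    (Finset.univ.filter
        (fun i : Fin n => ∃ g : Fin n → ZMod 2, fc π J g ≠ 0 ∧ g i = 1)).card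
      ≤ m * 2 ^ (2 * m - 2) := by
  refine main_aux π J hn m hm hloc _ ?_
  intro i hi
  exact (Finset.mem_filter.mp hi).2
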